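/- For all real numbers a, b with 0 < a < b and p > 1, one has ((b^p - a^p)/(p*(b-a)))^(p/(p-1)) ≤ (b^(p+1) - a^(p+1))/((p+1)*(b-a)). -/

import Mathlib

open MeasureTheory Set

/-- Jensen-type inequality for power means on an interval. -/
theorem jensen_power_mean (a b p : ℝ) (ha : 0 < a) (hab : a < b) (hp : 1 < p) :
    ((b ^ p - a ^ p) / (p * (b - a))) ^ (p / (p - 1)) ≤
      (b ^ (p + 1) - a ^ (p + 1)) / ((p + 1) * (b - a)) := by
  have hb : 0 < b := ha.trans hab
  have hba : 0 < b - a := sub_pos.2 hab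
  have hp0 : 0 < p := lt_trans one_pos hp
  have hp1 : 0 < p - 1 := sub_pos.2 hp
  set q : ℝ := p / (p - 1) with hq
  have hq1 : 1 ≤ q := by
    rw [hq, le_div_iff₀ hp1]; linarith
  set μ : Measure ℝ := volume.restrict (Icc a b) with hμ
  haveI : IsFiniteMeasure μ := by
    constructor
    rw [hμ, Measure.restrict_apply_univ, Real.volume_Icc]
    exact ENNReal.ofReal_lt_top
  haveI : NeZero μ := by
    constructor
    rw [hμ, Ne, Measure.restrict_eq_zero, Real.volume_Icc]
    simp [ne_of_gt hba, hab]
  set f : ℝ → ℝ := fun x => x ^ (p - 1) with hf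
  set g : ℝ → ℝ := fun y => y ^ q with hg
  have hgconv : ConvexOn ℝ (Ici (0:ℝ)) g := convexOn_rpow hq1
  have hgc : ContinuousOn g (Ici (0:ℝ)) :=
    continuousOn_id.rpow_const (fun x _ => Or.inr (le_trans zero_le_one hq1))
  have hfc : ContinuousOn f (Icc a b) :=
    continuousOn_id.rpow_const (fun x hx => Or.inl (ne_of_gt (lt_of_lt_of_le ha hx.1)))
  have hgfc : ContinuousOn (fun x => g (f x)) (Icc a b) :=
    (hfc.rpow_const (fun x _ => Or.inr (le_trans zero_le_one hq1)))
  have hfs : ∀ᵐ x ∂μ, f x ∈ Ici (0:ℝ) := by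
    rw [hμ]
    filter_upwards [ae_restrict_mem measurableSet_Icc] with x hx
    exact Real.rpow_nonneg (le_trans ha.le hx.1) _
  have hfi : Integrable f μ := by
    rw [hμ]; exact hfc.integrableOn_Icc
  have hgi : Integrable (g ∘ f) μ := by
    rw [hμ]; exact hgfc.integrableOn_Icc
  have key := hgconv.map_average_le hgc isClosed_Ici hfs hfi hgi
  -- compute averages
  have hvol : (μ Set.univ).toReal = b - a := by
    rw [hμ]; simp [Real.volume_Icc, hab.le, ENNReal.toReal_ofReal hba.le]
  have hint1 : ∫ x, f x ∂μ = (b ^ p - a ^ p) / p := by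
    rw [hμ, MeasureTheory.integral_Icc_eq_integral_Ioc,
      ← intervalIntegral.integral_of_le hab.le]
    rw [integral_rpow (Or.inl (by linarith))]
    rw [sub_add_cancel]
  have hint2 : ∫ x, g (f x) ∂μ = (b ^ (p + 1) - a ^ (p + 1)) / (p + 1) := by
    have heq : ∀ x ∈ Icc a b, g (f x) = x ^ p := by
      intro x hx
      have hx0 : (0:ℝ) ≤ x := le_trans ha.le hx.1
      show (x ^ (p - 1)) ^ q = x ^ p
      rw [← Real.rpow_mul hx0]
      congr 1
      rw [hq]
      field_simp
    rw [hμ, setIntegral_congr_fun measurableSet_Icc heq,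
      MeasureTheory.integral_Icc_eq_integral_Ioc, ← intervalIntegral.integral_of_le hab.le,
      integral_rpow (Or.inl (by linarith))]
  rw [average_eq, average_eq, measureReal_def, hvol, hint1, hint2, smul_eq_mul, smul_eq_mul] at key
  have h1 : (b - a)⁻¹ * ((b ^ p - a ^ p) / p) = (b ^ p - a ^ p) / (p * (b - a)) := by
    rw [inv_mul_eq_div, div_div, mul_comm]
  have h2 : (b - a)⁻¹ * ((b ^ (p + 1) - a ^ (p + 1)) / (p + 1)) =
      (b ^ (p + 1) - a ^ (p + 1)) / ((p + 1) * (b - a)) := by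
    rw [inv_mul_eq_div, div_div, mul_comm]
  rw [h1, h2] at key
  exact key
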